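/- For k > 1, the principal value of Im ∫₀^{k²} sqrt(ζ − k²)/(ζ − 1) dζ (with the branch of sqrt positive on the positive reals rotated to the cut) vanishes if and only if c = sqrt(k²−1) satisfies log(sqrt(c²+1)+c) = sqrt(1+c⁻²). -/

import Mathlib

set_option maxHeartbeats 1000000


open Filter

private noncomputable def stmt12G (k c x : ℝ) : ℝ :=
  2*Real.sqrt (k^2 - x) - c*Real.log (Real.sqrt (k^2-x) + c)
    + c*Real.log (Real.sqrt (k^2-x) - c)

private lemma stmt12_deriv (k c : ℝ) (hcpos : 0 < c) (hc2 : c^2 = k^2 - 1) (ζ : ℝ)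
    (hζ : ζ < k^2) (hζ1 : ζ ≠ 1) :
    HasDerivAt (stmt12G k c) (Real.sqrt (k^2-ζ)/(ζ-1)) ζ := by
  have hpos : 0 < k^2 - ζ := by linarith
  set u := Real.sqrt (k^2 - ζ) with hu
  have hupos : 0 < u := Real.sqrt_pos.2 hpos
  have hu2 : u^2 = k^2 - ζ := Real.sq_sqrt hpos.le
  have huc : u - c ≠ 0 := by
    intro h
    have : u = c := by linarith
    have : u^2 = c^2 := by rw [this]
    rw [hu2, hc2] at this
    exact hζ1 (by linarith)
  have hucp : u + c ≠ 0 := by positivity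
  have h1 : HasDerivAt (fun x : ℝ => k^2 - x) (-1) ζ := by
    simpa using (hasDerivAt_id ζ).const_sub (k^2)
  have hs : HasDerivAt (fun x => Real.sqrt (k^2 - x)) (1/(2*u) * (-1)) ζ :=
    (Real.hasDerivAt_sqrt hpos.ne').comp ζ h1
  have t1 : HasDerivAt (fun x => 2*Real.sqrt (k^2 - x)) (2 * (1/(2*u) * (-1))) ζ :=
    hs.const_mul 2
  have t2 : HasDerivAt (fun x => c * Real.log (Real.sqrt (k^2-x) + c))
      (c * ((u+c)⁻¹ * (1/(2*u) * (-1)))) ζ :=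
    (((Real.hasDerivAt_log hucp).comp (h := fun x => Real.sqrt (k^2-x) + c) ζ (hs.add_const c))).const_mul c
  have t3 : HasDerivAt (fun x => c * Real.log (Real.sqrt (k^2-x) - c))
      (c * ((u-c)⁻¹ * (1/(2*u) * (-1)))) ζ :=
    (((Real.hasDerivAt_log huc).comp (h := fun x => Real.sqrt (k^2-x) - c) ζ (hs.sub_const c))).const_mul c
  have := (t1.sub t2).add t3
  refine this.congr_deriv ?_
  have hden : ζ - 1 ≠ 0 := sub_ne_zero.2 hζ1
  have hc2u : ζ - 1 = c^2 - u^2 := by rw [hu2, hc2]; ring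
  have hne : c^2 - u^2 ≠ 0 := by
    intro h
    apply huc
    nlinarith [hu2]
  rw [hu]
  rw [← hu, hc2u]
  field_simp
  ring

private lemma stmt12_integrable (k : ℝ) (a b : ℝ) (hab : a ≤ b)
    (h1 : ∀ x ∈ Set.Icc a b, x ≠ 1) :
    IntervalIntegrable (fun ζ => Real.sqrt (k^2 - ζ)/(ζ - 1)) MeasureTheory.volume a b := by
  apply ContinuousOn.intervalIntegrable
  rw [Set.uIcc_of_le hab]
  apply ContinuousOn.div
  · exact (Real.continuous_sqrt.comp (by continuity)).continuousOn
  · exact (continuous_id.sub continuous_const).continuousOn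
  · intro x hx h
    exact h1 x hx (by linarith [sub_eq_zero.mp h])

private lemma stmt12_eval (k c ε : ℝ) (hk : 1 < k) (hcpos : 0 < c) (hc2 : c^2 = k^2 - 1)
    (hε0 : 0 < ε) (hεlt1 : ε < 1) (hεltc : ε < c^2) :
    ((∫ ζ in (0:ℝ)..(1 - ε), Real.sqrt (k ^ 2 - ζ) / (ζ - 1)) +
        ∫ ζ in (1 + ε)..(k ^ 2), Real.sqrt (k ^ 2 - ζ) / (ζ - 1)) =
      2*Real.sqrt (c^2+ε) - 2*Real.sqrt (c^2-ε)
        - 2*c*Real.log (Real.sqrt (c^2+ε)+c) + 2*c*Real.log (Real.sqrt (c^2-ε)+c)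
        + (2*c*Real.log (k+c) - 2*k) := by
  have hk0 : 0 < k := lt_trans one_pos hk
  have hk2 : 1 < k^2 := by nlinarith
  have h1ε : 1 + ε < k^2 := by nlinarith
  have hI1 : (∫ ζ in (0:ℝ)..(1 - ε), Real.sqrt (k ^ 2 - ζ) / (ζ - 1))
      = stmt12G k c (1-ε) - stmt12G k c 0 := by
    apply intervalIntegral.integral_eq_sub_of_hasDerivAt
    · intro x hx
      rw [Set.uIcc_of_le (by linarith)] at hx
      exact stmt12_deriv k c hcpos hc2 x (by cases hx; nlinarith) (by cases hx; linarith)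
    · exact stmt12_integrable k 0 (1-ε) (by linarith)
        (fun x hx => by cases hx; intro h; simp_all; linarith)
  have hI2 : (∫ ζ in (1+ε)..(k^2), Real.sqrt (k ^ 2 - ζ) / (ζ - 1))
      = stmt12G k c (k^2) - stmt12G k c (1+ε) := by
    apply intervalIntegral.integral_eq_sub_of_hasDerivAt_of_le (by linarith)
    · -- continuity of G on Icc
      have hsc : ContinuousOn (fun x => Real.sqrt (k^2 - x)) (Set.Icc (1+ε) (k^2)) :=
        (Real.continuous_sqrt.comp (by continuity)).continuousOn
      have hlt : ∀ x ∈ Set.Icc (1+ε) (k^2), Real.sqrt (k^2 - x) < c := by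
        intro x hx
        have h2 : k^2 - x < c^2 := by cases hx; nlinarith
        calc Real.sqrt (k^2 - x) < Real.sqrt (c^2) := by
              apply Real.sqrt_lt_sqrt _ h2
              cases hx; linarith
          _ = c := Real.sqrt_sq hcpos.le
      unfold stmt12G
      apply ContinuousOn.add
      apply ContinuousOn.sub
      · exact ContinuousOn.mul continuousOn_const hsc
      · apply ContinuousOn.mul continuousOn_const
        apply ContinuousOn.log (hsc.add continuousOn_const)
        intro x hx
        have := Real.sqrt_nonneg (k^2 - x)
        show Real.sqrt (k^2 - x) + c ≠ 0
        positivity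
      · apply ContinuousOn.mul continuousOn_const
        apply ContinuousOn.log (hsc.sub continuousOn_const)
        intro x hx
        have := hlt x hx
        intro h
        linarith [sub_eq_zero.mp h]
    · intro x hx
      exact stmt12_deriv k c hcpos hc2 x hx.2 (by cases hx; linarith)
    · exact stmt12_integrable k (1+ε) (k^2) (by linarith)
        (fun x hx => by cases hx; intro h; simp_all; linarith)
  rw [hI1, hI2]
  have hck : c < k := by nlinarith
  have hGk2 : stmt12G k c (k^2) = 0 := by
    unfold stmt12G
    simp only [sub_self, Real.sqrt_zero]
    rw [show (0:ℝ) - c = -c by ring, Real.log_neg_eq_log]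
    ring
  have hG0 : stmt12G k c 0 = 2*k - 2*c*Real.log (k+c) := by
    have hkk : Real.sqrt (k^2 - 0) = k := by
      rw [sub_zero, Real.sqrt_sq hk0.le]
    have hmul : (k - c) * (k + c) = 1 := by nlinarith
    have hkc : Real.log (k - c) = - Real.log (k + c) := by
      have h1 : Real.log ((k-c)*(k+c)) = Real.log (k-c) + Real.log (k+c) :=
        Real.log_mul (by nlinarith) (by nlinarith)
      rw [hmul, Real.log_one] at h1
      linarith
    unfold stmt12G
    rw [hkk, hkc]
    ring
  have ha2 : Real.sqrt (c^2 + ε) ^ 2 = c^2 + ε := Real.sq_sqrt (by positivity)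
  have hb2 : Real.sqrt (c^2 - ε) ^ 2 = c^2 - ε := Real.sq_sqrt (by linarith)
  set a := Real.sqrt (c^2 + ε) with haa
  set b := Real.sqrt (c^2 - ε) with hbb
  have hac : c < a := by
    have := Real.sqrt_lt_sqrt (by positivity : (0:ℝ) ≤ c^2) (by linarith : c^2 < c^2 + ε)
    rwa [Real.sqrt_sq hcpos.le] at this
  have hbc : b < c := by
    have := Real.sqrt_lt_sqrt (by linarith : (0:ℝ) ≤ c^2 - ε) (by linarith : c^2 - ε < c^2)
    rwa [Real.sqrt_sq hcpos.le] at this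
  have hbnn : 0 ≤ b := Real.sqrt_nonneg _
  have hG1m : stmt12G k c (1-ε) = 2*a - c*Real.log (a+c) + c*Real.log (a-c) := by
    unfold stmt12G
    rw [show k^2 - (1-ε) = c^2 + ε by rw [hc2]; ring]
  have hG1p : stmt12G k c (1+ε) = 2*b - c*Real.log (b+c) + c*Real.log (b-c) := by
    unfold stmt12G
    rw [show k^2 - (1+ε) = c^2 - ε by rw [hc2]; ring]
  have hlogA : Real.log (a-c) = Real.log ε - Real.log (a+c) := by
    have hmul : (a-c)*(a+c) = ε := by ring_nf; ring_nf at ha2; linarith [ha2]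
    have h1 : Real.log ((a-c)*(a+c)) = Real.log (a-c) + Real.log (a+c) :=
      Real.log_mul (by linarith) (by positivity)
    rw [hmul] at h1
    linarith
  have hlogB : Real.log (b-c) = Real.log ε - Real.log (b+c) := by
    have hmul : (c-b)*(c+b) = ε := by ring_nf; ring_nf at hb2; linarith [hb2]
    have h1 : Real.log ((c-b)*(c+b)) = Real.log (c-b) + Real.log (c+b) :=
      Real.log_mul (by linarith) (by positivity)
    rw [hmul] at h1
    have h2 : Real.log (b-c) = Real.log (c-b) := by
      rw [show b - c = -(c-b) by ring, Real.log_neg_eq_log]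
    rw [h2, show b + c = c + b by ring]
    linarith
  rw [hG1m, hG1p, hGk2, hG0, hlogA, hlogB]
  ring

theorem stmt_12 (k : ℝ) (hk : 1 < k) :
    (Tendsto
        (fun ε : ℝ =>
          (∫ ζ in (0:ℝ)..(1 - ε), Real.sqrt (k ^ 2 - ζ) / (ζ - 1)) +
            ∫ ζ in (1 + ε)..(k ^ 2), Real.sqrt (k ^ 2 - ζ) / (ζ - 1))
        (nhdsWithin 0 (Set.Ioi 0)) (nhds 0)) ↔
      Real.log (Real.sqrt (Real.sqrt (k ^ 2 - 1) ^ 2 + 1) + Real.sqrt (k ^ 2 - 1)) =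
        Real.sqrt (1 + 1 / Real.sqrt (k ^ 2 - 1) ^ 2) := by
  have hk0 : 0 < k := lt_trans one_pos hk
  set c := Real.sqrt (k^2 - 1) with hc
  have hk2 : 1 < k^2 := by nlinarith
  have hc2 : c^2 = k^2 - 1 := Real.sq_sqrt (by linarith)
  have hcpos : 0 < c := Real.sqrt_pos.2 (by linarith)
  set L : ℝ := 2*c*Real.log (k+c) - 2*k with hL
  set g : ℝ → ℝ := fun ε => 2*Real.sqrt (c^2+ε) - 2*Real.sqrt (c^2-ε)
      - 2*c*Real.log (Real.sqrt (c^2+ε)+c) + 2*c*Real.log (Real.sqrt (c^2-ε)+c) + L with hg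
  have hmin : 0 < min 1 (c^2) := lt_min one_pos (by positivity)
  -- Tendsto g to L
  have hgtend : Tendsto g (nhdsWithin 0 (Set.Ioi 0)) (nhds L) := by
    have hgc : ContinuousAt g 0 := by
      have hs1 : ContinuousAt (fun ε : ℝ => Real.sqrt (c^2 + ε)) 0 :=
        (Real.continuous_sqrt.comp (by continuity)).continuousAt
      have hs2 : ContinuousAt (fun ε : ℝ => Real.sqrt (c^2 - ε)) 0 :=
        (Real.continuous_sqrt.comp (by continuity)).continuousAt
      have hv : Real.sqrt (c^2 + (0:ℝ)) + c ≠ 0 := by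
        rw [add_zero, Real.sqrt_sq hcpos.le]; positivity
      have hv2 : Real.sqrt (c^2 - (0:ℝ)) + c ≠ 0 := by
        rw [sub_zero, Real.sqrt_sq hcpos.le]; positivity
      have hl1 : ContinuousAt (fun ε : ℝ => Real.log (Real.sqrt (c^2+ε)+c)) 0 :=
        ContinuousAt.log (hs1.add continuousAt_const) hv
      have hl2 : ContinuousAt (fun ε : ℝ => Real.log (Real.sqrt (c^2-ε)+c)) 0 :=
        ContinuousAt.log (hs2.add continuousAt_const) hv2
      exact ((((continuousAt_const.mul hs1).sub (continuousAt_const.mul hs2)).sub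
        (continuousAt_const.mul hl1)).add (continuousAt_const.mul hl2)).add continuousAt_const
    have hg0 : g 0 = L := by
      simp only [hg, add_zero, sub_zero]
      ring
    have := hgc.tendsto.mono_left (nhdsWithin_le_nhds (s := Set.Ioi (0:ℝ)))
    rwa [hg0] at this
  -- the integral sum tends to L
  have hftend : Tendsto
      (fun ε : ℝ =>
        (∫ ζ in (0:ℝ)..(1 - ε), Real.sqrt (k ^ 2 - ζ) / (ζ - 1)) +
          ∫ ζ in (1 + ε)..(k ^ 2), Real.sqrt (k ^ 2 - ζ) / (ζ - 1))
      (nhdsWithin 0 (Set.Ioi 0)) (nhds L) := by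
    refine hgtend.congr' ?_
    filter_upwards [Ioo_mem_nhdsGT_of_mem (Set.left_mem_Ico.2 hmin)] with ε hε
    exact (stmt12_eval k c ε hk hcpos hc2 hε.1
      (lt_of_lt_of_le hε.2 (min_le_left _ _))
      (lt_of_lt_of_le hε.2 (min_le_right _ _))).symm
  -- rewrite the RHS condition
  have hsq1 : Real.sqrt (c^2 + 1) = k := by
    rw [hc2, show k^2 - 1 + 1 = k^2 by ring, Real.sqrt_sq hk0.le]
  have hsq2 : Real.sqrt (1 + 1/c^2) = k/c := by
    have h1 : 1 + 1/c^2 = (k/c)^2 := by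
      field_simp [hcpos.ne']
      linarith [hc2]
    rw [h1, Real.sqrt_sq (by positivity)]
  rw [hsq1, hsq2]
  constructor
  · intro h
    have hL0 : L = 0 := tendsto_nhds_unique hftend h
    rw [hL] at hL0
    field_simp
    nlinarith [hL0]
  · intro h
    have hL0 : L = 0 := by
      rw [hL]
      have h2 : Real.log (k + c) = k / c := h
      field_simp at h2
      nlinarith [h2]
    rwa [hL0] at hftend
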